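/- Let v_0, v_1, ..., v_{k+1} be words and p ≥ 1. If for some n > p the word v_0 · v_1^n · v_2 · ... · v_{k-1} · v_k^n · v_{k+1} has period p, then for all natural numbers n_1, ..., n_k the word v_0 · v_1^{n_1} · v_2 · ... · v_{k-1} · v_k^{n_k} · v_{k+1} has period p. -/

import Mathlib

/-- A word `w` has period `p` if letters at distance `p` coincide. -/
def HasPeriod {α : Type*} (w : List α) (p : ℕ) : Prop :=
  ∀ i, i + p < w.length → w[i]? = w[i + p]?

/-- `npow n v` is the `n`-fold repetition `v^n`. -/
def npow {α : Type*} (n : ℕ) (v : List α) : List α :=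
  (List.replicate n v).flatten

/-- `iterWord base rep k e` is the word
`base 0 · (rep 0)^{e 0} · base 1 · (rep 1)^{e 1} · ... · (rep (k-1))^{e (k-1)} · base k`,
i.e. `v_0 · v_1^{e_1} · v_2 · ... · v_{k-1} · v_k^{e_k} · v_{k+1}`. -/
def iterWord {α : Type*} (base rep : ℕ → List α) (k : ℕ) (e : ℕ → ℕ) : List α :=
  (List.range k).foldr (fun j acc => base j ++ npow (e j) (rep j) ++ acc) (base k)


section Helpers
variable {α : Type*} {β : Type*}

/-- Periodicity of a total function on an initial segment. -/
def Per (f : ℕ → β) (N p : ℕ) : Prop := ∀ i, i + p < N → f i = f (i + p)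

lemma per_chain {f : ℕ → β} {N p : ℕ} (h : Per f N p) :
    ∀ t i, i + p * t < N → f i = f (i + p * t) := by
  intro t
  induction t with
  | zero => simp
  | succ t ih =>
    intro i hi
    have h1 : i + p < N := by
      have : p * t + p = p * (t+1) := by ring
      omega
    have e : i + p * (t + 1) = (i + p) + p * t := by ring
    rw [h i h1, e]
    exact ih (i + p) (by omega)

lemma per_congr {f : ℕ → β} {N p : ℕ} (h : Per f N p) (hp : 0 < p) :
    ∀ i j, i < N → j < N → i % p = j % p → f i = f j := by
  have key : ∀ i j, i ≤ j → j < N → i % p = j % p → f i = f j := by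
    intro i j hle hj hmod
    have hdvd : p ∣ j - i := (Nat.modEq_iff_dvd' hle).mp hmod
    obtain ⟨t, ht⟩ := hdvd
    have : j = i + p * t := by omega
    rw [this]
    exact per_chain h t i (by omega)
  intro i j hi hj hmod
  rcases le_total i j with hle | hle
  · exact key i j hle hj hmod
  · exact (key j i hle hi hmod.symm).symm

/-- Fine–Wilf on an initial segment (weak version, length `≥ p + d`). -/
lemma fineWilf : ∀ s : ℕ, ∀ {N p d : ℕ} {f : ℕ → β}, p + d ≤ s → 0 < p → 0 < d →
    Per f N p → Per f N d → p + d ≤ N → Per f N (Nat.gcd p d) := by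
  intro s
  induction s with
  | zero => intro N p d f hs hp hd _ _ _; omega
  | succ s ih =>
    intro N p d f hs hp hd hfp hfd hN
    rcases lt_trichotomy p d with hlt | heq | hlt
    · -- p < d : replace d by d - p on [0, N - p)
      have hd' : 0 < d - p := by omega
      have hfd' : Per f (N - p) (d - p) := by
        intro i hi
        have e1 : f i = f (i + d) := hfd i (by omega)
        have e2 : f (i + (d - p)) = f (i + (d - p) + p) := hfp _ (by omega)
        have e3 : i + (d - p) + p = i + d := by omega
        rw [e1, e2, e3]
      have hfp' : Per f (N - p) p := fun i hi => hfp i (by omega)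
      have hg0 : Per f (N - p) (Nat.gcd p (d - p)) :=
        ih (by omega) hp hd' hfp' hfd' (by omega)
      have hgcd : Nat.gcd p (d - p) = Nat.gcd p d :=
        Nat.gcd_sub_self_right (le_of_lt hlt)
      rw [hgcd] at hg0
      set g := Nat.gcd p d with hgdef
      have hgp : g ∣ p := Nat.gcd_dvd_left _ _
      have hgd : g ∣ d := Nat.gcd_dvd_right _ _
      have hgle : g ≤ d - p := Nat.le_of_dvd hd' (Nat.dvd_sub hgd hgp)
      intro i hi
      by_cases hcase : i + g < N - p
      · exact hg0 i hcase
      · have hip : p ≤ i := by omega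
        have e1 : f (i - p) = f (i - p + p) := hfp _ (by omega)
        have e2 : f (i - p) = f (i - p + g) := hg0 _ (by omega)
        have e3 : f (i + g - p) = f (i + g - p + p) := hfp _ (by omega)
        have e4 : i - p + p = i := by omega
        have e5 : i - p + g = i + g - p := by omega
        have e6 : i + g - p + p = i + g := by omega
        rw [e4] at e1; rw [e5] at e2; rw [e6] at e3
        rw [← e1, e2, e3]
    · subst heq
      rw [Nat.gcd_self]
      exact hfp
    · -- d < p : symmetric
      have hp' : 0 < p - d := by omega
      have hfp' : Per f (N - d) (p - d) := by
        intro i hi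
        have e1 : f i = f (i + p) := hfp i (by omega)
        have e2 : f (i + (p - d)) = f (i + (p - d) + d) := hfd _ (by omega)
        have e3 : i + (p - d) + d = i + p := by omega
        rw [e1, e2, e3]
      have hfd' : Per f (N - d) d := fun i hi => hfd i (by omega)
      have hg0 : Per f (N - d) (Nat.gcd d (p - d)) :=
        ih (by omega) hd hp' hfd' hfp' (by omega)
      have hgcd : Nat.gcd d (p - d) = Nat.gcd p d := by
        rw [Nat.gcd_sub_self_right (le_of_lt hlt), Nat.gcd_comm]
      rw [hgcd] at hg0
      set g := Nat.gcd p d with hgdef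
      have hgp : g ∣ p := Nat.gcd_dvd_left _ _
      have hgd : g ∣ d := Nat.gcd_dvd_right _ _
      have hgle : g ≤ p - d := Nat.le_of_dvd hp' (Nat.dvd_sub hgp hgd)
      intro i hi
      by_cases hcase : i + g < N - d
      · exact hg0 i hcase
      · have hip : d ≤ i := by omega
        have e1 : f (i - d) = f (i - d + d) := hfd _ (by omega)
        have e2 : f (i - d) = f (i - d + g) := hg0 _ (by omega)
        have e3 : f (i + g - d) = f (i + g - d + d) := hfd _ (by omega)
        have e4 : i - d + d = i := by omega
        have e5 : i - d + g = i + g - d := by omega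
        have e6 : i + g - d + d = i + g := by omega
        rw [e4] at e1; rw [e5] at e2; rw [e6] at e3
        rw [← e1, e2, e3]

/-- Arithmetic helper: one can step from `i` by multiples of `p` into `[a, a+p)`. -/
lemma exists_step (p a i : ℕ) (hp : 0 < p) (hia : i ≤ a) :
    ∃ k, a ≤ i + p * k ∧ i + p * k < a + p := by
  refine ⟨(a - i + p - 1) / p, ?_, ?_⟩ <;>
  · have h1 := Nat.div_add_mod (a - i + p - 1) p
    have h2 : (a - i + p - 1) % p < p := Nat.mod_lt _ hp
    omega

lemma npow_succ (m : ℕ) (v : List α) : npow (m+1) v = v ++ npow m v := by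
  simp [npow, List.replicate_succ]

lemma npow_length (m : ℕ) (v : List α) : (npow m v).length = m * v.length := by
  induction m with
  | zero => simp [npow]
  | succ m ih => rw [npow_succ]; simp [ih]; ring

lemma npow_get? (m : ℕ) (v : List α) (t : ℕ) (ht : t < m * v.length) :
    (npow m v)[t]? = v[t % v.length]? := by
  induction m generalizing t with
  | zero => omega
  | succ m ih =>
    rw [npow_succ]
    by_cases h : t < v.length
    · rw [List.getElem?_append_left h, Nat.mod_eq_of_lt h]
    · have hle : v.length ≤ t := le_of_not_gt h
      rw [List.getElem?_append_right hle]
      have hm : (m+1) * v.length = m * v.length + v.length := by ring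
      rw [ih (t - v.length) (by omega)]
      congr 1
      conv_rhs => rw [show t = (t - v.length) + v.length by omega, Nat.add_mod_right]

lemma wget_left {x A y : List α} {i : ℕ} (h : i < x.length) :
    (x ++ A ++ y)[i]? = x[i]? := by
  rw [List.getElem?_append_left (by simp; omega), List.getElem?_append_left h]

lemma wget_mid {x A y : List α} {i : ℕ} (h1 : x.length ≤ i) (h2 : i < x.length + A.length) :
    (x ++ A ++ y)[i]? = A[i - x.length]? := by
  rw [List.getElem?_append_left (by simp; omega), List.getElem?_append_right h1]

lemma wget_right {x A y : List α} {i : ℕ} (h : x.length + A.length ≤ i) :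
    (x ++ A ++ y)[i]? = y[i - (x.length + A.length)]? := by
  rw [List.getElem?_append_right (by simp; omega)]
  congr 1
  simp

lemma wlen (x A y : List α) : (x ++ A ++ y).length = x.length + A.length + y.length := by
  simp; omega

end Helpers

section Core
variable {α : Type*}

lemma npow_nil (m : ℕ) : npow m ([] : List α) = [] := by
  induction m with
  | zero => rfl
  | succ m ih => rw [npow_succ, ih]; rfl

/-- The key single-block lemma. -/
lemma core_lemma (x v y : List α) (p n : ℕ) (hp : 1 ≤ p) (hn : p < n)
    (H : HasPeriod (x ++ npow n v ++ y) p) (m : ℕ) :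
    HasPeriod (x ++ npow m v ++ y) p := by
  rcases Nat.eq_zero_or_pos v.length with hv | hv
  · have hnil : v = [] := List.length_eq_zero_iff.mp hv
    subst hnil
    rw [npow_nil] at H ⊢
    exact H
  · set d := v.length with hd
    set a := x.length with ha
    set g := Nat.gcd p d with hgdef
    have hg1 : 0 < g := Nat.gcd_pos_of_pos_left _ hp
    have hgp : g ∣ p := Nat.gcd_dvd_left _ _
    have hgd : g ∣ d := Nat.gcd_dvd_right _ _
    set w := x ++ npow n v ++ y with hw
    set N := a + n * d + y.length with hN
    have hlen : w.length = N := by rw [hw, wlen, npow_length, ← hd, hN]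
    have hpd : p + d ≤ n * d := by
      have h1 : p ≤ p * d := Nat.le_mul_of_pos_right p hv
      have h2 : (p + 1) * d ≤ n * d := Nat.mul_le_mul_right d (by omega)
      have h3 : (p + 1) * d = p * d + d := by ring
      omega
    have hdnd : d ≤ n * d := by omega
    have hpnd : p ≤ n * d := by omega
    have hperN : Per (fun i => w[i]?) N p := fun i hi => H i (by omega)
    -- the block function
    have hFval : ∀ t, t < n * d → w[a + t]? = v[t % d]? := by
      intro t ht
      rw [hw, wget_mid (by omega) (by rw [npow_length, ← hd]; omega)]
      rw [show a + t - x.length = t by omega]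
      exact npow_get? n v t (by rw [← hd]; omega)
    have hFp : Per (fun t => w[a + t]?) (n * d) p := by
      intro t ht
      have := hperN (a + t) (by omega)
      simpa [Nat.add_assoc] using this
    have hFd : Per (fun t => w[a + t]?) (n * d) d := by
      intro t ht
      simp only
      rw [hFval t (by omega), hFval (t + d) ht, Nat.add_mod_right]
    have hFg : Per (fun t => w[a + t]?) (n * d) g :=
      fineWilf (p + d) le_rfl hp hv hFp hFd hpd
    -- reach: every position of w has the letter of some block position with same residue
    have reach : ∀ i, i < N → ∃ t, t < n * d ∧ (a + t) % g = i % g ∧ w[i]? = w[a + t]? := by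
      intro i hi
      rcases lt_or_ge i a with hia | hia
      · obtain ⟨k, hk1, hk2⟩ := exists_step p a i hp (le_of_lt hia)
        refine ⟨i + p * k - a, by omega, ?_, ?_⟩
        · have e : a + (i + p * k - a) = i + p * k := by omega
          rw [e]
          obtain ⟨c, hc⟩ : g ∣ p * k := Dvd.dvd.mul_right hgp k
          rw [hc, Nat.add_mul_mod_self_left]
        · have e : a + (i + p * k - a) = i + p * k := by omega
          rw [e]
          exact per_chain hperN k i (by omega)
      · rcases lt_or_ge i (a + n * d) with hib | hib
        · exact ⟨i - a, by omega, by congr 1; omega, by congr 1; omega⟩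
        · obtain ⟨k, hk1, hk2⟩ := exists_step p (i - (a + n * d) + 1) 0 hp (by omega)
          simp only [Nat.zero_add] at hk1 hk2
          have hkle : p * k ≤ i := by omega
          refine ⟨i - p * k - a, by omega, ?_, ?_⟩
          · have e : a + (i - p * k - a) = i - p * k := by omega
            rw [e]
            obtain ⟨c, hc⟩ : g ∣ p * k := Dvd.dvd.mul_right hgp k
            have : i = (i - p * k) + g * c := by omega
            conv_rhs => rw [this, Nat.add_mul_mod_self_left]
          · have e : a + (i - p * k - a) = i - p * k := by omega
            rw [e]
            have := per_chain hperN k (i - p * k) (by omega)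
            rw [show i - p * k + p * k = i by omega] at this
            exact this.symm
    -- claim A: letters of w depend only on residue mod g
    have claimA : ∀ i j, i < N → j < N → i % g = j % g → w[i]? = w[j]? := by
      intro i j hi hj hmod
      obtain ⟨ti, hti, hri, hei⟩ := reach i hi
      obtain ⟨tj, htj, hrj, hej⟩ := reach j hj
      rw [hei, hej]
      have hres : ti % g = tj % g := by
        have h1 : (a + ti) % g = (a + tj) % g := by rw [hri, hrj, hmod]
        exact Nat.ModEq.add_left_cancel' a h1
      exact per_congr hFg hg1 ti tj hti htj hres
    -- representation of letters of w_m as letters of w with the same residue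
    have hlm : (x ++ npow m v ++ y).length = a + m * d + y.length := by
      rw [wlen, npow_length, ← hd, ← ha]
    have repm : ∀ i, i < a + m * d + y.length →
        ∃ j, j < N ∧ j % g = i % g ∧ (x ++ npow m v ++ y)[i]? = w[j]? := by
      intro i hi
      rcases lt_or_ge i a with h1 | h1
      · refine ⟨i, by omega, rfl, ?_⟩
        rw [wget_left h1, hw, wget_left h1]
      · rcases lt_or_ge i (a + m * d) with h2 | h2
        · have hr : (i - a) % d < d := Nat.mod_lt _ hv
          refine ⟨a + (i - a) % d, by omega, ?_, ?_⟩
          · have hmd : (i - a) % d % g = (i - a) % g := Nat.mod_mod_of_dvd _ hgd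
            calc (a + (i - a) % d) % g = (a % g + (i - a) % d % g) % g := by rw [Nat.add_mod]
              _ = (a % g + (i - a) % g) % g := by rw [hmd]
              _ = (a + (i - a)) % g := by rw [← Nat.add_mod]
              _ = i % g := by congr 1; omega
          · rw [wget_mid h1 (by rw [npow_length, ← hd]; omega)]
            rw [show i - x.length = i - a by omega]
            rw [npow_get? m v (i - a) (by rw [← hd]; omega)]
            rw [hFval _ (by omega)]
            rw [Nat.mod_mod_of_dvd (i - a) (dvd_refl d)]
        · refine ⟨i - (a + m * d) + (a + n * d), by omega, ?_, ?_⟩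
          · obtain ⟨cm, hcm⟩ : g ∣ m * d := Dvd.dvd.mul_left hgd m
            obtain ⟨cn, hcn⟩ : g ∣ n * d := Dvd.dvd.mul_left hgd n
            calc (i - (a + m * d) + (a + n * d)) % g
                = (i - (a + m * d) + a + g * cn) % g := by congr 1; omega
              _ = (i - (a + m * d) + a) % g := Nat.add_mul_mod_self_left _ _ _
              _ = i % g := by
                  have : i = (i - (a + m * d) + a) + g * cm := by omega
                  conv_rhs => rw [this, Nat.add_mul_mod_self_left]
          · rw [wget_right (by rw [npow_length, ← hd]; omega), hw,
              wget_right (by rw [npow_length, ← hd]; omega)]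
            rw [npow_length, npow_length, ← hd]
            congr 1
            omega
    -- finish
    intro i hi
    rw [hlm] at hi
    obtain ⟨j1, hj1N, hj1g, hj1e⟩ := repm i (by omega)
    obtain ⟨j2, hj2N, hj2g, hj2e⟩ := repm (i + p) hi
    rw [hj1e, hj2e]
    apply claimA _ _ hj1N hj2N
    obtain ⟨c, hc⟩ := hgp
    calc j1 % g = i % g := hj1g
      _ = (i + g * c) % g := (Nat.add_mul_mod_self_left _ _ _).symm
      _ = (i + p) % g := by congr 1; omega
      _ = j2 % g := hj2g.symm

end Core

section Main
variable {α : Type*}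

lemma iterWord_succ (b r : ℕ → List α) (k : ℕ) (e : ℕ → ℕ) :
    iterWord b r (k+1) e =
      b 0 ++ npow (e 0) (r 0) ++
        iterWord (fun i => b (i+1)) (fun i => r (i+1)) k (fun i => e (i+1)) := by
  unfold iterWord
  rw [List.range_succ_eq_map]
  simp [List.foldr_map, Nat.succ_eq_add_one]

lemma main_aux (p : ℕ) (hp : 1 ≤ p) :
    ∀ (k : ℕ) (u : List α) (base rep : ℕ → List α),
      (∃ n, p < n ∧ HasPeriod (u ++ iterWord base rep k fun _ => n) p) →
      ∀ e : ℕ → ℕ, HasPeriod (u ++ iterWord base rep k e) p := by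
  intro k
  induction k with
  | zero =>
    rintro u b r ⟨n, hn, H⟩ e
    exact H
  | succ k ih =>
    rintro u b r ⟨n, hn, H⟩ e
    rw [iterWord_succ] at H ⊢
    have hH : HasPeriod ((u ++ b 0) ++ npow n (r 0) ++
        iterWord (fun i => b (i+1)) (fun i => r (i+1)) k (fun _ => n)) p := by
      simpa [List.append_assoc] using H
    have h1 := core_lemma (u ++ b 0) (r 0) _ p n hp hn hH (e 0)
    have h2 := ih (u ++ b 0 ++ npow (e 0) (r 0)) (fun i => b (i+1)) (fun i => r (i+1))
      ⟨n, hn, by simpa [List.append_assoc] using h1⟩ (fun i => e (i+1))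
    simpa [List.append_assoc] using h2

end Main


/-- Lemma on periods of words with iterated factors: if for some `n > p` the word
`v_0 · v_1^n · v_2 · ... · v_{k-1} · v_k^n · v_{k+1}` has period `p`, then for all
choices of exponents `n_1, ..., n_k` the word
`v_0 · v_1^{n_1} · v_2 · ... · v_{k-1} · v_k^{n_k} · v_{k+1}` has period `p`. -/
theorem periods_iterated_factors {α : Type*} (base rep : ℕ → List α) (k p : ℕ)
    (hp : 1 ≤ p)
    (h : ∃ n, p < n ∧ HasPeriod (iterWord base rep k (fun _ => n)) p) :
    ∀ e : ℕ → ℕ, HasPeriod (iterWord base rep k e) p := by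
  intro e
  obtain ⟨n, hn, H⟩ := h
  have := main_aux p hp k [] base rep ⟨n, hn, by simpa using H⟩ e
  simpa using this
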